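/- Let H be a nondegenerate graph property closed under union with K₁, G a graph, and v ∈ V(G). If v belongs to no minimum dominating H-set of G, then γ_H(G − v) = γ_H(G). -/

import Mathlib

open SimpleGraph

/-- A graph property: a class of finite simple graphs on arbitrary vertex types. -/
abbrev GraphProp := ∀ (V : Type), SimpleGraph V → Prop

/-- Closure under graph isomorphism. -/
def IsoClosed (P : GraphProp) : Prop :=
  ∀ (V W : Type) (G : SimpleGraph V) (H : SimpleGraph W), Nonempty (G ≃g H) → P V G → P W H

/-- A property is nondegenerate if it contains all edgeless graphs. -/
def Nondegenerate (P : GraphProp) : Prop :=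
  IsoClosed P ∧ ∀ (V : Type), P V ⊥

/-- Closed under induced subgraphs. -/
def InducedHereditary (P : GraphProp) : Prop :=
  IsoClosed P ∧ ∀ (V : Type) (G : SimpleGraph V) (s : Set V), P V G → P s (G.induce s)

/-- Closed under all subgraphs. -/
def Hereditary (P : GraphProp) : Prop :=
  InducedHereditary P ∧ ∀ (V : Type) (G G' : SimpleGraph V), G' ≤ G → P V G → P V G'

/-- The graph `G` together with one new isolated vertex. -/
def addK1 {V : Type} (G : SimpleGraph V) : SimpleGraph (V ⊕ Unit) where
  Adj a b := ∃ x y, a = Sum.inl x ∧ b = Sum.inl y ∧ G.Adj x y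
  symm := by constructor; rintro a b ⟨x, y, rfl, rfl, h⟩; exact ⟨y, x, rfl, rfl, h.symm⟩
  loopless := by constructor; rintro a ⟨x, y, rfl, hy, h⟩; simp only [Sum.inl.injEq] at hy; subst hy; exact G.irrefl h

/-- Closure under disjoint union with `K₁`. -/
def ClosedUnderK1 (P : GraphProp) : Prop :=
  ∀ (V : Type) (G : SimpleGraph V), P V G → P (V ⊕ Unit) (addK1 G)

/-- `S` is a dominating set of `G`. -/
def IsDominating {V : Type} (G : SimpleGraph V) (S : Set V) : Prop :=
  ∀ v ∉ S, ∃ u ∈ S, G.Adj u v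

/-- `S` is a dominating set inducing a subgraph with property `P`. -/
def IsDomPSet (P : GraphProp) {V : Type} (G : SimpleGraph V) (S : Set V) : Prop :=
  IsDominating G S ∧ P S (G.induce S)

/-- The domination number with respect to the property `P`. -/
noncomputable def gammaP (P : GraphProp) {V : Type} [Fintype V] (G : SimpleGraph V) : ℕ :=
  sInf (Set.ncard '' {S : Set V | IsDomPSet P G S})

/-- A minimum dominating `P`-set. -/
def IsGammaSet (P : GraphProp) {V : Type} [Fintype V] (G : SimpleGraph V) (S : Set V) : Prop :=
  IsDomPSet P G S ∧ S.ncard = gammaP P G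

/-- The ordinary domination number. -/
noncomputable def gamma {V : Type} [Fintype V] (G : SimpleGraph V) : ℕ :=
  sInf (Set.ncard '' {S : Set V | IsDominating G S})

/-- The graph obtained from `G` by deleting the edge `uv` and replacing it by the
path `u - x₀ - x₁ - ⋯ - x_{t-1} - v` through `t` new vertices. -/
def subdiv {V : Type} (G : SimpleGraph V) (u v : V) (t : ℕ) : SimpleGraph (V ⊕ Fin t) where
  Adj a b := match a, b with
    | Sum.inl a, Sum.inl b => G.Adj a b ∧ ¬((a = u ∧ b = v) ∨ (a = v ∧ b = u))
    | Sum.inl a, Sum.inr i => (a = u ∧ (i : ℕ) = 0) ∨ (a = v ∧ (i : ℕ) + 1 = t)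
    | Sum.inr i, Sum.inl a => (a = u ∧ (i : ℕ) = 0) ∨ (a = v ∧ (i : ℕ) + 1 = t)
    | Sum.inr i, Sum.inr j => (i : ℕ) + 1 = (j : ℕ) ∨ (j : ℕ) + 1 = (i : ℕ)
  symm := by
    constructor
    rintro (a | i) (b | j) h
    · exact ⟨h.1.symm, fun hc => h.2 (by tauto)⟩
    · exact h
    · exact h
    · tauto
  loopless := by
    constructor
    rintro (a | i) h
    · exact G.irrefl h.1
    · omega

/-- The private neighbour set `pn_G[x, X] = {y : N[y,G] ∩ X = {x}}`. -/
def pn {V : Type} (G : SimpleGraph V) (X : Set V) (x : V) : Set V :=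
  {y | insert y (G.neighborSet y) ∩ X = {x}}

/-- The graph `G` with the vertex `v` deleted. -/
abbrev delVert {V : Type} (G : SimpleGraph V) (v : V) : SimpleGraph {w : V // w ≠ v} :=
  G.induce {w : V | w ≠ v}

/-- An independent set. -/
def IsIndep {V : Type} (G : SimpleGraph V) (S : Set V) : Prop :=
  S.Pairwise fun a b => ¬ G.Adj a b


lemma induce_eq_bot_of_indep {V : Type} (G : SimpleGraph V) (S : Set V)
    (h : IsIndep G S) : G.induce S = ⊥ := by
  ext a b
  simp only [SimpleGraph.bot_adj, iff_false]
  intro hab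
  exact h a.2 b.2 (fun e => hab.ne (Subtype.ext e)) hab

lemma exists_domPSet (P : GraphProp) (h1 : Nondegenerate P) {V : Type} [Fintype V]
    (G : SimpleGraph V) : ∃ S : Set V, IsDomPSet P G S := by
  obtain ⟨S, hS, hmax⟩ := Set.Finite.exists_maximalFor Set.ncard {S : Set V | IsIndep G S}
    (Set.toFinite _) ⟨∅, by simp [IsIndep]⟩
  refine ⟨S, ?_, ?_⟩
  · intro w hw
    by_contra hno
    push_neg at hno
    have hind : IsIndep G (insert w S) := by
      intro a ha b hb hab
      rcases ha with rfl | ha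
      · rcases hb with rfl | hb
        · exact absurd rfl hab
        · exact fun h => hno b hb h.symm
      · rcases hb with rfl | hb
        · exact fun h => hno a ha h
        · exact hS ha hb hab
    have h1' := hmax hind (Set.ncard_le_ncard (Set.subset_insert _ _) (Set.toFinite _))
    have h2' := Set.ncard_insert_of_notMem hw (Set.toFinite S)
    omega
  · rw [induce_eq_bot_of_indep G S hS]; exact h1.2 _

lemma gammaP_le (P : GraphProp) {V : Type} [Fintype V] (G : SimpleGraph V) (S : Set V)
    (hS : IsDomPSet P G S) : gammaP P G ≤ S.ncard :=
  Nat.sInf_le ⟨S, hS, rfl⟩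

lemma exists_gammaSet (P : GraphProp) (h1 : Nondegenerate P) {V : Type} [Fintype V]
    (G : SimpleGraph V) : ∃ S : Set V, IsGammaSet P G S := by
  obtain ⟨S0, hS0⟩ := exists_domPSet P h1 G
  obtain ⟨S, hS, hcard⟩ := Nat.sInf_mem (⟨_, ⟨S0, hS0, rfl⟩⟩ :
    Set.Nonempty (Set.ncard '' {S : Set V | IsDomPSet P G S}))
  exact ⟨S, hS, hcard⟩

def iso1 {V : Type} (G : SimpleGraph V) (v : V) (M : Set V) (hv : v ∉ M) :
    (delVert G v).induce (Subtype.val ⁻¹' M) ≃g G.induce M :=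
  { toFun := fun x => ⟨x.1.1, x.2⟩
    invFun := fun y => ⟨⟨y.1, fun h => hv (h ▸ y.2)⟩, y.2⟩
    left_inv := fun x => rfl
    right_inv := fun y => rfl
    map_rel_iff' := Iff.rfl }

def iso2 {V : Type} (G : SimpleGraph V) (v : V) (S : Set {w : V // w ≠ v}) :
    (delVert G v).induce S ≃g G.induce (Subtype.val '' S) :=
  { toFun := fun x => ⟨x.1.1, ⟨x.1, x.2, rfl⟩⟩
    invFun := fun y => ⟨⟨y.1, fun h => by obtain ⟨a, _, he⟩ := y.2; exact a.2 (he.trans h)⟩,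
      by obtain ⟨a, ha, hae⟩ := y.2; exact Set.mem_of_eq_of_mem (Subtype.ext hae.symm) ha⟩
    left_inv := fun x => rfl
    right_inv := fun y => rfl
    map_rel_iff' := Iff.rfl }

def iso3 {V : Type} [DecidableEq V] (G : SimpleGraph V) (v : V) (S : Set V) (hv : v ∉ S)
    (hn : ∀ u ∈ S, ¬ G.Adj u v) :
    addK1 (G.induce S) ≃g G.induce (insert v S) :=
  { toFun := fun x => match x with
      | Sum.inl x => ⟨x.1, Or.inr x.2⟩
      | Sum.inr _ => ⟨v, Or.inl rfl⟩
    invFun := fun y => if h : y.1 = v then Sum.inr () else Sum.inl ⟨y.1, y.2.resolve_left h⟩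
    left_inv := by
      rintro (x | x)
      · have hx : (x : V) ≠ v := fun h => hv (h ▸ x.2)
        exact dif_neg hx
      · simp
    right_inv := by
      rintro ⟨y, hy⟩
      by_cases h : y = v
      · subst h; simp
      · simp [h]
    map_rel_iff' := by
      rintro (a | a) (b | b)
      · constructor
        · intro h
          exact ⟨a, b, rfl, rfl, h⟩
        · rintro ⟨x, y, hx, hy, h⟩
          cases hx; cases hy; exact h
      · constructor
        · intro h
          exact absurd h (hn a.1 a.2)
        · rintro ⟨x, y, hx, hy, h⟩; cases hy
      · constructor
        · intro h
          exact absurd h.symm (hn b.1 b.2)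
        · rintro ⟨x, y, hx, hy, h⟩; cases hx
      · constructor
        · intro h
          exact absurd h (G.loopless.irrefl v)
        · rintro ⟨x, y, hx, hy, h⟩; cases hx }

/-- if `v` belongs to no `γ_H`-set of `G` then `γ_H(G − v) = γ_H(G)`. -/
theorem gammaP_delVert_eq (P : GraphProp) (h1 : Nondegenerate P) (h2 : ClosedUnderK1 P)
    {V : Type} [Fintype V] [DecidableEq V] (G : SimpleGraph V) (v : V)
    (hv : ∀ M : Set V, IsGammaSet P G M → v ∉ M) :
    gammaP P (delVert G v) = gammaP P G := by
  classical
  obtain ⟨M, hM⟩ := exists_gammaSet P h1 G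
  have hvM : v ∉ M := hv M hM
  have hMdom : IsDominating (delVert G v) (Subtype.val ⁻¹' M) := by
    intro x hx
    obtain ⟨u, huM, hadj⟩ := hM.1.1 x.1 hx
    exact ⟨⟨u, fun h => hvM (h ▸ huM)⟩, huM, hadj⟩
  have hMP : P _ ((delVert G v).induce (Subtype.val ⁻¹' M)) :=
    h1.1 _ _ _ _ ⟨(iso1 G v M hvM).symm⟩ hM.1.2
  have himg : Subtype.val '' (Subtype.val ⁻¹' M : Set {w : V // w ≠ v}) = M := by
    rw [Set.image_preimage_eq_iff, Subtype.range_coe_subtype]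
    exact fun x hx (h : x = v) => hvM (h ▸ hx)
  have hcardM : (Subtype.val ⁻¹' M : Set {w : V // w ≠ v}).ncard = M.ncard := by
    conv_rhs => rw [← himg]
    exact (Set.ncard_image_of_injective _ Subtype.val_injective).symm
  have hle1 : gammaP P (delVert G v) ≤ gammaP P G := by
    have := gammaP_le P (delVert G v) _ ⟨hMdom, hMP⟩
    have hMn := hM.2
    omega
  obtain ⟨S, hS⟩ := exists_gammaSet P h1 (delVert G v)
  have hcardS' : (Subtype.val '' S).ncard = S.ncard :=
    Set.ncard_image_of_injective _ Subtype.val_injective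
  have hvS' : v ∉ Subtype.val '' S := by
    rintro ⟨a, -, ha⟩; exact a.2 ha
  have hdom' : ∀ x : V, x ∉ Subtype.val '' S → x ≠ v → ∃ u ∈ Subtype.val '' S, G.Adj u x := by
    intro x hx hxv
    have hns : (⟨x, hxv⟩ : {w : V // w ≠ v}) ∉ S := fun h => hx (Set.mem_image_of_mem _ h)
    obtain ⟨u, hu, hadj⟩ := hS.1.1 _ hns
    exact ⟨u.1, Set.mem_image_of_mem _ hu, hadj⟩
  have hPS' : P _ (G.induce (Subtype.val '' S)) := h1.1 _ _ _ _ ⟨iso2 G v S⟩ hS.1.2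
  have hSn : S.ncard = gammaP P (delVert G v) := hS.2
  by_cases hcase : ∃ u ∈ Subtype.val '' S, G.Adj u v
  · have hdom : IsDominating G (Subtype.val '' S) := by
      intro w hw
      by_cases hwv : w = v
      · subst hwv; exact hcase
      · exact hdom' w hw hwv
    have := gammaP_le P G _ ⟨hdom, hPS'⟩
    omega
  · push_neg at hcase
    have hPins : P _ (G.induce (insert v (Subtype.val '' S))) :=
      h1.1 _ _ _ _ ⟨iso3 G v _ hvS' hcase⟩ (h2 _ _ hPS')
    have hdomins : IsDominating G (insert v (Subtype.val '' S)) := by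
      intro w hw
      have hwv : w ≠ v := by rintro rfl; exact hw (Set.mem_insert _ _)
      have hwS' : w ∉ Subtype.val '' S := fun h => hw (Set.mem_insert_of_mem _ h)
      obtain ⟨u, hu, hadj⟩ := hdom' w hwS' hwv
      exact ⟨u, Set.mem_insert_of_mem _ hu, hadj⟩
    have hpair : IsDomPSet P G (insert v (Subtype.val '' S)) := ⟨hdomins, hPins⟩
    have hle2 := gammaP_le P G (insert v (Subtype.val '' S)) hpair
    have hins : (insert v (Subtype.val '' S)).ncard = (Subtype.val '' S).ncard + 1 :=
      Set.ncard_insert_of_notMem hvS' (Set.toFinite _)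
    by_cases heq : gammaP P G = (Subtype.val '' S).ncard + 1
    · exact absurd (Set.mem_insert v _)
        (hv (insert v (Subtype.val '' S)) ⟨hpair, by omega⟩)
    · omega
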